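/- Let M > 0, τ²M² < 1, 0 < λ < √(1 − τ²M²). Consider the Gram recursion on a finite sample Z_{−n+1}, …, Z_0 ∈ R^d with ‖Z_{−i}‖ ≤ M: set G_{i,0} = G_{0,j} = 1/(1 − λ²) and G_{i,j} = 1 + λ² G_{i−1,j−1}/(1 − τ²⟨Z_{−(n−i)}, Z_{−(n−j)}⟩) for 1 ≤ j ≤ i ≤ n, and extend by symmetry. Then G_{i,j} = K(Z^{-n+1}_{-(n-i)}, Z^{-n+1}_{-(n-j)}) where K is the Volterra kernel in closed form, Z^{-n+1}_{-i} denotes the truncated input padded with zeros, and the zero-padding convention makes K(0,0)-type initial values equal 1/(1 − λ²). -/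

import Mathlib

open scoped RealInnerProductSpace

/-- The Volterra reservoir kernel in closed form (index `m` stands for time `-m`). -/
noncomputable def volterraKernel {d : ℕ} (lam τ : ℝ)
    (z z' : ℕ → EuclideanSpace ℝ (Fin d)) : ℝ :=
  1 + ∑' k : ℕ, lam ^ (2 * k + 2) *
    ∏ m ∈ Finset.range (k + 1), (1 - τ ^ 2 * ⟪z m, z' m⟫)⁻¹

/-- The zero-padded truncated input `Z^{-n+1}_{-i} = (…, 0, 0, Z_{-n+1}, …, Z_{-i})`,
as a depth-indexed sequence: depth `m` (time `-i-m`) carries `Z_{-(i+m)}` when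
`i + m ≤ n-1` and `0` otherwise.  Here `Z d` stands for the sample value `Z_{-d}`. -/
noncomputable def paddedInput {d : ℕ} (n : ℕ) (Z : ℕ → EuclideanSpace ℝ (Fin d))
    (i : ℕ) : ℕ → EuclideanSpace ℝ (Fin d) :=
  fun m => if i + m < n then Z (i + m) else 0

section aux
variable {d : ℕ}

lemma paddedInput_norm_le {n : ℕ} {Z : ℕ → EuclideanSpace ℝ (Fin d)} {M : ℝ}
    (hM : 0 ≤ M) (hZ : ∀ m, m < n → ‖Z m‖ ≤ M) (a m : ℕ) :
    ‖paddedInput n Z a m‖ ≤ M := by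
  unfold paddedInput
  split
  · exact hZ _ ‹_›
  · simpa using hM

lemma paddedInput_shift (n : ℕ) (Z : ℕ → EuclideanSpace ℝ (Fin d)) (a : ℕ) :
    (fun m => paddedInput n Z a (m + 1)) = paddedInput n Z (a + 1) := by
  funext m
  simp only [paddedInput]
  rw [show a + (m + 1) = a + 1 + m by omega]

lemma vk_denom_le {M τ : ℝ} {z z' : ℕ → EuclideanSpace ℝ (Fin d)}
    (hz : ∀ m, ‖z m‖ ≤ M) (hz' : ∀ m, ‖z' m‖ ≤ M) (m : ℕ) :
    1 - τ ^ 2 * M ^ 2 ≤ 1 - τ ^ 2 * ⟪z m, z' m⟫ := by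
  have h1 : ⟪z m, z' m⟫ ≤ ‖z m‖ * ‖z' m‖ := real_inner_le_norm _ _
  have hM0 : 0 ≤ M := (norm_nonneg (z m)).trans (hz m)
  have h2 : ‖z m‖ * ‖z' m‖ ≤ M * M :=
    mul_le_mul (hz m) (hz' m) (norm_nonneg _) hM0
  nlinarith [sq_nonneg τ]

lemma vk_summable {M τ lam : ℝ} (hc : 0 < 1 - τ ^ 2 * M ^ 2)
    (hlam2 : lam ^ 2 < 1 - τ ^ 2 * M ^ 2)
    {z z' : ℕ → EuclideanSpace ℝ (Fin d)}
    (hz : ∀ m, ‖z m‖ ≤ M) (hz' : ∀ m, ‖z' m‖ ≤ M) :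
    Summable (fun k => lam ^ (2 * k) *
      ∏ m ∈ Finset.range k, (1 - τ ^ 2 * ⟪z m, z' m⟫)⁻¹) := by
  have hd : ∀ m, 0 < 1 - τ ^ 2 * ⟪z m, z' m⟫ := fun m =>
    hc.trans_le (vk_denom_le hz hz' m)
  have hr0 : 0 ≤ lam ^ 2 * (1 - τ ^ 2 * M ^ 2)⁻¹ := by positivity
  have hr1 : lam ^ 2 * (1 - τ ^ 2 * M ^ 2)⁻¹ < 1 := by
    rw [← div_eq_mul_inv]
    exact (div_lt_one hc).mpr hlam2
  have hpow : ∀ k : ℕ, (0:ℝ) ≤ lam ^ (2 * k) := fun k => by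
    rw [pow_mul]; positivity
  refine Summable.of_nonneg_of_le (fun k => ?_) (fun k => ?_)
    (summable_geometric_of_lt_one hr0 hr1)
  · exact mul_nonneg (hpow k) (Finset.prod_nonneg fun i _ => (inv_pos.mpr (hd i)).le)
  · calc lam ^ (2 * k) * ∏ m ∈ Finset.range k, (1 - τ ^ 2 * ⟪z m, z' m⟫)⁻¹
        ≤ lam ^ (2 * k) * ((1 - τ ^ 2 * M ^ 2)⁻¹) ^ k := by
          refine mul_le_mul_of_nonneg_left ?_ (hpow k)
          calc ∏ m ∈ Finset.range k, (1 - τ ^ 2 * ⟪z m, z' m⟫)⁻¹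
              ≤ ∏ _m ∈ Finset.range k, (1 - τ ^ 2 * M ^ 2)⁻¹ :=
                Finset.prod_le_prod (fun i _ => (inv_pos.mpr (hd i)).le)
                  (fun i _ => inv_anti₀ hc (vk_denom_le hz hz' i))
            _ = ((1 - τ ^ 2 * M ^ 2)⁻¹) ^ k := by
                simp [Finset.prod_const]
      _ = (lam ^ 2 * (1 - τ ^ 2 * M ^ 2)⁻¹) ^ k := by
          rw [mul_pow, ← pow_mul]

lemma vk_rec {M τ lam : ℝ} (hc : 0 < 1 - τ ^ 2 * M ^ 2)
    (hlam2 : lam ^ 2 < 1 - τ ^ 2 * M ^ 2)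
    {z z' : ℕ → EuclideanSpace ℝ (Fin d)}
    (hz : ∀ m, ‖z m‖ ≤ M) (hz' : ∀ m, ‖z' m‖ ≤ M) :
    volterraKernel lam τ z z' = 1 + lam ^ 2 *
      volterraKernel lam τ (fun m => z (m + 1)) (fun m => z' (m + 1)) /
      (1 - τ ^ 2 * ⟪z 0, z' 0⟫) := by
  have S : Summable (fun k => lam ^ (2 * k) *
      ∏ m ∈ Finset.range k, (1 - τ ^ 2 * ⟪z (m + 1), z' (m + 1)⟫)⁻¹) :=
    vk_summable hc hlam2 (fun m => hz _) (fun m => hz' _)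
  have h1 : ∀ k : ℕ, lam ^ (2 * k + 2) *
      ∏ m ∈ Finset.range (k + 1), (1 - τ ^ 2 * ⟪z m, z' m⟫)⁻¹
      = (lam ^ 2 * (1 - τ ^ 2 * ⟪z 0, z' 0⟫)⁻¹) *
        (lam ^ (2 * k) * ∏ m ∈ Finset.range k, (1 - τ ^ 2 * ⟪z (m + 1), z' (m + 1)⟫)⁻¹) := by
    intro k
    rw [Finset.prod_range_succ', pow_add]
    ring
  have key : (∑' k : ℕ, lam ^ (2 * k + 2) *
      ∏ m ∈ Finset.range (k + 1), (1 - τ ^ 2 * ⟪z m, z' m⟫)⁻¹)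
      = lam ^ 2 * (1 - τ ^ 2 * ⟪z 0, z' 0⟫)⁻¹ *
        (1 + ∑' k : ℕ, lam ^ (2 * k + 2) *
          ∏ m ∈ Finset.range (k + 1), (1 - τ ^ 2 * ⟪z (m + 1), z' (m + 1)⟫)⁻¹) := by
    rw [tsum_congr h1, tsum_mul_left, Summable.tsum_eq_zero_add S]
    congr 1
    congr 1
    simp
  simp only [volterraKernel]
  rw [key, div_eq_mul_inv]
  ring

lemma vk_zero {τ lam : ℝ} (hlam1 : lam ^ 2 < 1)
    {z z' : ℕ → EuclideanSpace ℝ (Fin d)} (hz' : ∀ m, z' m = 0) :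
    volterraKernel lam τ z z' = 1 / (1 - lam ^ 2) := by
  have h : ∀ k : ℕ, lam ^ (2 * k + 2) *
      ∏ m ∈ Finset.range (k + 1), (1 - τ ^ 2 * ⟪z m, z' m⟫)⁻¹
      = lam ^ 2 * (lam ^ 2) ^ k := by
    intro k
    have hone : ∀ m ∈ Finset.range (k + 1), (1 - τ ^ 2 * ⟪z m, z' m⟫)⁻¹ = 1 := by
      intro m _; simp [hz']
    rw [Finset.prod_congr rfl hone, Finset.prod_const_one, mul_one,
      show 2 * k + 2 = 2 + 2 * k from by ring, pow_add, pow_mul]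
  have hne : 1 - lam ^ 2 ≠ 0 := by nlinarith
  unfold volterraKernel
  rw [tsum_congr h, tsum_mul_left, tsum_geometric_of_lt_one (sq_nonneg lam) hlam1]
  field_simp
  ring

lemma vk_symm (lam τ : ℝ) (z z' : ℕ → EuclideanSpace ℝ (Fin d)) :
    volterraKernel lam τ z z' = volterraKernel lam τ z' z := by
  unfold volterraKernel
  congr 1
  apply tsum_congr; intro k
  congr 1
  apply Finset.prod_congr rfl; intro m _
  rw [real_inner_comm]

end aux

/-- Correctness of the Gram recursion.  Under `M > 0`, `τ²M² < 1`,
`0 < λ < √(1-τ²M²)`, if `G` satisfies the initial conditions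
`G_{i,0} = G_{0,j} = 1/(1-λ²)`, the recursion
`G_{i,j} = 1 + λ² G_{i-1,j-1}/(1 - τ²⟨Z_{-(n-i)}, Z_{-(n-j)}⟩)` for `1 ≤ j ≤ i ≤ n`, and
symmetry, then `G_{i,j} = K(Z^{-n+1}_{-(n-i)}, Z^{-n+1}_{-(n-j)})` for all
`1 ≤ i, j ≤ n`, where `K` is the Volterra kernel in closed form and the truncated inputs
are padded with zeros (making `K` of the all-zero padding equal `1/(1-λ²)`). -/
theorem gram_recursion_correct {d : ℕ} (M τ lam : ℝ)
    (hM : 0 < M) (hτ : 0 < τ) (hτM : τ ^ 2 * M ^ 2 < 1)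
    (hlam0 : 0 < lam) (hlam : lam < Real.sqrt (1 - τ ^ 2 * M ^ 2))
    (n : ℕ) (Z : ℕ → EuclideanSpace ℝ (Fin d)) (hZ : ∀ m, m < n → ‖Z m‖ ≤ M)
    (G : ℕ → ℕ → ℝ)
    (hG0 : ∀ i, i ≤ n → G i 0 = 1 / (1 - lam ^ 2) ∧ G 0 i = 1 / (1 - lam ^ 2))
    (hGrec : ∀ i j, 1 ≤ j → j ≤ i → i ≤ n →
      G i j = 1 + lam ^ 2 * G (i - 1) (j - 1) /
        (1 - τ ^ 2 * ⟪Z (n - i), Z (n - j)⟫))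
    (hGsym : ∀ i j, i ≤ n → j ≤ n → G i j = G j i) :
    ∀ i j, 1 ≤ i → i ≤ n → 1 ≤ j → j ≤ n →
      G i j = volterraKernel lam τ (paddedInput n Z (n - i)) (paddedInput n Z (n - j)) := by
  have hc : 0 < 1 - τ ^ 2 * M ^ 2 := by linarith
  have hlam2 : lam ^ 2 < 1 - τ ^ 2 * M ^ 2 := by
    have := (Real.lt_sqrt hlam0.le).mp hlam
    linarith
  have hlam1 : lam ^ 2 < 1 := by nlinarith [mul_pos hτ hM, mul_pos (mul_pos hτ hM) (mul_pos hτ hM)]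
  have hpad : ∀ a m, ‖paddedInput n Z a m‖ ≤ M :=
    fun a m => paddedInput_norm_le hM.le hZ a m
  have key : ∀ j i, 1 ≤ j → j ≤ i → i ≤ n →
      G i j = volterraKernel lam τ (paddedInput n Z (n - i)) (paddedInput n Z (n - j)) := by
    intro j
    induction j with
    | zero => intro i h; omega
    | succ j ih =>
      intro i hj1 hji hin
      have hi1 : 1 ≤ i := le_trans hj1 hji
      rw [hGrec i (j + 1) (by omega) hji hin,
        vk_rec hc hlam2 (fun m => hpad _ m) (fun m => hpad _ m),
        paddedInput_shift, paddedInput_shift,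
        show n - i + 1 = n - (i - 1) from by omega,
        show n - (j + 1) + 1 = n - j from by omega]
      have e3 : paddedInput n Z (n - i) 0 = Z (n - i) := by
        simp only [paddedInput, Nat.add_zero]
        rw [if_pos (by omega)]
      have e4 : paddedInput n Z (n - (j + 1)) 0 = Z (n - (j + 1)) := by
        simp only [paddedInput, Nat.add_zero]
        rw [if_pos (by omega)]
      rw [e3, e4]
      have hmain : G (i - 1) (j + 1 - 1) =
          volterraKernel lam τ (paddedInput n Z (n - (i - 1))) (paddedInput n Z (n - j)) := by
        rcases Nat.eq_zero_or_pos j with h0 | hj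
        · subst h0
          rw [Nat.add_sub_cancel, (hG0 (i - 1) (by omega)).1]
          rw [vk_zero hlam1 (z := paddedInput n Z (n - (i - 1)))
            (fun m => by simp [paddedInput])]
        · rw [Nat.add_sub_cancel]
          exact ih (i - 1) hj (by omega) (by omega)
      rw [hmain]
  intro i j hi hin hj hjn
  rcases le_total j i with h | h
  · exact key j i hj h hin
  · rw [hGsym i j hin hjn, vk_symm]
    exact key i j hi h hjn
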